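/- The number of symmetric non-nesting partitions of [-2n, 2n] \ {0} (all blocks of size 2, closed under negation of blocks, with no two nested blocks) is binom(2n, n). -/

import Mathlib

open Finset

namespace SNN

variable {m : ℕ}

def emb (m : ℕ) : Fin m ↪ Fin (m+1) := ⟨Fin.castSucc, Fin.castSucc_injective m⟩

@[simp] lemma emb_apply (i : Fin m) : emb m i = i.castSucc := rfl

def okF (F : Finset (Fin m)) : Prop :=
  ∀ k : Fin m, k.val + 1 ≤ 2 * (F ∩ Finset.Iic k).card

instance (F : Finset (Fin m)) : Decidable (okF F) := by
  unfold okF; infer_instance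

def cnt (m t : ℕ) : ℕ :=
  (Finset.univ.filter (fun F : Finset (Fin m) => okF F ∧ F.card = t)).card

def down (F : Finset (Fin (m+1))) : Finset (Fin m) :=
  Finset.univ.filter (fun i : Fin m => i.castSucc ∈ F)

lemma mem_down {F : Finset (Fin (m+1))} {i : Fin m} :
    i ∈ down F ↔ i.castSucc ∈ F := by simp [down]

lemma down_map_castSucc (G : Finset (Fin m)) :
    down (G.map (emb m)) = G := by
  ext i; simp [mem_down, Fin.castSucc_injective]

lemma down_insert_last (G : Finset (Fin m)) :
    down (insert (Fin.last m) (G.map (emb m))) = G := by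
  ext i
  simp [mem_down, Fin.castSucc_injective, (Fin.castSucc_lt_last i).ne]

lemma inter_Iic_castSucc (F : Finset (Fin (m+1))) (k : Fin m) :
    F ∩ Finset.Iic k.castSucc = ((down F) ∩ Finset.Iic k).map (emb m) := by
  ext j
  simp only [Finset.mem_inter, Finset.mem_Iic, Finset.mem_map, mem_down]
  constructor
  · rintro ⟨hj, hjk⟩
    have hne : j ≠ Fin.last m := by
      intro h; subst h
      exact absurd hjk (Fin.castSucc_lt_last k).not_ge
    obtain ⟨i, rfl⟩ := Fin.exists_castSucc_eq.2 hne
    exact ⟨i, ⟨hj, by exact_mod_cast hjk⟩, rfl⟩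
  · rintro ⟨i, ⟨hi, hik⟩, rfl⟩
    exact ⟨hi, by exact_mod_cast hik⟩

lemma card_inter_Iic (F : Finset (Fin (m+1))) (k : Fin m) :
    (F ∩ Finset.Iic k.castSucc).card = ((down F) ∩ Finset.Iic k).card := by
  rw [inter_Iic_castSucc, Finset.card_map]

lemma Iic_last : (Finset.Iic (Fin.last m) : Finset (Fin (m+1))) = Finset.univ := by
  ext j; simp [Fin.le_last]

lemma card_eq_down (F : Finset (Fin (m+1))) :
    F.card = (down F).card + (if Fin.last m ∈ F then 1 else 0) := by
  classical
  have h1 : F.filter (fun j => j ≠ Fin.last m) = (down F).map (emb m) := by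
    ext j
    simp only [Finset.mem_filter, Finset.mem_map, mem_down]
    constructor
    · rintro ⟨hj, hne⟩
      obtain ⟨i, rfl⟩ := Fin.exists_castSucc_eq.2 hne
      exact ⟨i, hj, rfl⟩
    · rintro ⟨i, hi, rfl⟩
      exact ⟨hi, (Fin.castSucc_lt_last i).ne⟩
  have h2 := Finset.card_filter_add_card_filter_not
    (s := F) (p := fun j => j ≠ Fin.last m)
  rw [h1, Finset.card_map] at h2
  have h3 : F.filter (fun j => ¬ j ≠ Fin.last m) = if Fin.last m ∈ F then {Fin.last m} else ∅ := by
    ext j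
    by_cases h : Fin.last m ∈ F <;> simp [h] <;> aesop
  rw [h3] at h2
  by_cases h : Fin.last m ∈ F <;> simp [h] at h2 ⊢ <;> omega

lemma okF_succ_iff (F : Finset (Fin (m+1))) :
    okF F ↔ okF (down F) ∧ m + 1 ≤ 2 * F.card := by
  constructor
  · intro h
    refine ⟨fun k => ?_, ?_⟩
    · have := h k.castSucc
      rwa [card_inter_Iic] at this
    · have := h (Fin.last m)
      rwa [Iic_last, Finset.inter_univ, Fin.val_last] at this
  · rintro ⟨h1, h2⟩ k
    rcases eq_or_ne k (Fin.last m) with rfl | hne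
    · rwa [Iic_last, Finset.inter_univ, Fin.val_last]
    · obtain ⟨i, rfl⟩ := Fin.exists_castSucc_eq.2 hne
      rw [card_inter_Iic]
      exact h1 i

lemma cnt_eq_zero_of_lt {t : ℕ} (h : 2 * t < m) : cnt m t = 0 := by
  rw [cnt, Finset.card_eq_zero, Finset.filter_eq_empty_iff]
  rintro F - ⟨hok, rfl⟩
  rcases m with _ | m'
  · omega
  · have := hok (Fin.last m')
    rw [Iic_last, Finset.inter_univ, Fin.val_last] at this
    omega

lemma cnt_eq_zero_of_gt {t : ℕ} (h : m < t) : cnt m t = 0 := by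
  rw [cnt, Finset.card_eq_zero, Finset.filter_eq_empty_iff]
  rintro F - ⟨hok, rfl⟩
  have := Finset.card_le_univ F
  simp at this
  omega

lemma cnt_succ {t : ℕ} (h : m + 1 ≤ 2 * t) :
    cnt (m+1) t = cnt m (t-1) + cnt m t := by
  classical
  rw [cnt, ← Finset.card_filter_add_card_filter_not
    (s := Finset.univ.filter (fun F : Finset (Fin (m+1)) => okF F ∧ F.card = t))
    (p := fun F => Fin.last m ∈ F)]
  congr 1
  · -- last ∈ F case : bijection with cnt m (t-1)
    rw [cnt, Finset.filter_filter]
    apply Finset.card_bij' (fun F _ => down F)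
      (fun G _ => insert (Fin.last m) (G.map (emb m)))
    · rintro F hF
      simp only [Finset.mem_filter, Finset.mem_univ, true_and] at hF ⊢
      obtain ⟨⟨hok, hcard⟩, hlast⟩ := hF
      rw [okF_succ_iff] at hok
      have := card_eq_down F
      rw [if_pos hlast] at this
      exact ⟨hok.1, by omega⟩
    · rintro G hG
      simp only [Finset.mem_filter, Finset.mem_univ, true_and] at hG ⊢
      obtain ⟨hok, hcard⟩ := hG
      have hd := down_insert_last G
      have hlast : Fin.last m ∈ insert (Fin.last m) (G.map (emb m)) :=
        Finset.mem_insert_self _ _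
      have hcard2 : (insert (Fin.last m) (G.map (emb m))).card = t := by
        rw [Finset.card_insert_of_notMem, Finset.card_map]
        · omega
        · simp only [Finset.mem_map]
          rintro ⟨i, -, hi⟩
          exact (Fin.castSucc_lt_last i).ne hi
      refine ⟨⟨?_, hcard2⟩, hlast⟩
      rw [okF_succ_iff, hd]
      exact ⟨hok, by omega⟩
    · rintro F hF
      simp only [Finset.mem_filter, Finset.mem_univ, true_and] at hF
      have hlast : Fin.last m ∈ F := hF.2
      ext j
      simp only [Finset.mem_insert, Finset.mem_map, mem_down, emb_apply]
      constructor
      · rintro (rfl | ⟨i, hi, rfl⟩)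
        · exact hlast
        · exact hi
      · intro hj
        rcases eq_or_ne j (Fin.last m) with rfl | hne
        · exact Or.inl rfl
        · obtain ⟨i, rfl⟩ := Fin.exists_castSucc_eq.2 hne
          exact Or.inr ⟨i, hj, rfl⟩
    · rintro G hG
      exact down_insert_last G
  · -- last ∉ F case : bijection with cnt m t
    rw [cnt, Finset.filter_filter]
    apply Finset.card_bij' (fun F _ => down F)
      (fun G _ => G.map (emb m))
    · rintro F hF
      simp only [Finset.mem_filter, Finset.mem_univ, true_and] at hF ⊢
      obtain ⟨⟨hok, hcard⟩, hlast⟩ := hF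
      rw [okF_succ_iff] at hok
      have := card_eq_down F
      rw [if_neg hlast] at this
      exact ⟨hok.1, by omega⟩
    · rintro G hG
      simp only [Finset.mem_filter, Finset.mem_univ, true_and] at hG ⊢
      obtain ⟨hok, hcard⟩ := hG
      have hd := down_map_castSucc G
      have hlast : Fin.last m ∉ G.map (emb m) := by
        simp only [Finset.mem_map]
        rintro ⟨i, -, hi⟩
        exact (Fin.castSucc_lt_last i).ne hi
      refine ⟨⟨?_, by rw [Finset.card_map]; exact hcard⟩, hlast⟩
      rw [okF_succ_iff, hd, Finset.card_map]
      exact ⟨hok, by omega⟩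
    · rintro F hF
      simp only [Finset.mem_filter, Finset.mem_univ, true_and] at hF
      have hlast : Fin.last m ∉ F := hF.2
      ext j
      simp only [Finset.mem_map, mem_down, emb_apply]
      constructor
      · rintro ⟨i, hi, rfl⟩; exact hi
      · intro hj
        rcases eq_or_ne j (Fin.last m) with rfl | hne
        · exact absurd hj hlast
        · obtain ⟨i, rfl⟩ := Fin.exists_castSucc_eq.2 hne
          exact ⟨i, hj, rfl⟩
    · rintro G hG
      exact down_map_castSucc G

lemma cnt_add_choose {t : ℕ} (h : m ≤ 2 * t) :
    cnt m t + Nat.choose m (t+1) = Nat.choose m t := by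
  induction m generalizing t with
  | zero =>
    rcases Nat.eq_zero_or_pos t with rfl | ht
    · have h1 : cnt 0 0 = 1 := by
        rw [cnt]
        have h2 : (Finset.univ.filter (fun F : Finset (Fin 0) => okF F ∧ F.card = 0))
            = {(∅ : Finset (Fin 0))} := by
          ext F
          have hF : F = ∅ := Finset.eq_empty_of_isEmpty F
          subst hF
          simp only [Finset.mem_filter, Finset.mem_univ, true_and, Finset.mem_singleton]
          simp [okF, IsEmpty.forall_iff]
        rw [h2, Finset.card_singleton]
      simp [h1]
    · rw [cnt_eq_zero_of_gt (by omega), Nat.choose_eq_zero_of_lt (by omega),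
        Nat.choose_eq_zero_of_lt (by omega)]
  | succ m ih =>
    obtain ⟨s, rfl⟩ : ∃ s, t = s + 1 := ⟨t - 1, by omega⟩
    rw [cnt_succ h]
    have hs1 : s + 1 - 1 = s := by omega
    rw [hs1]
    have key : cnt m s + Nat.choose m (s+1) = Nat.choose m s := by
      rcases le_or_gt m (2 * s) with h2 | h2
      · exact ih h2
      · have hm : m = 2 * s + 1 := by omega
        rw [cnt_eq_zero_of_lt (by omega), zero_add]
        have hsym : Nat.choose m s = Nat.choose m (s+1) := by
          have h4 : m - (s+1) = s := by omega
          calc Nat.choose m s = Nat.choose m (m - (s+1)) := by rw [h4]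
            _ = Nat.choose m (s+1) := Nat.choose_symm (by omega)
        exact hsym.symm
    have h3 : cnt m (s+1) + Nat.choose m (s+2) = Nat.choose m (s+1) := ih (by omega)
    have p1 : Nat.choose (m+1) (s+2) = Nat.choose m (s+1) + Nat.choose m (s+2) :=
      Nat.choose_succ_succ m (s+1)
    have p2 : Nat.choose (m+1) (s+1) = Nat.choose m s + Nat.choose m (s+1) :=
      Nat.choose_succ_succ m s
    have e1 : Nat.choose (m+1) (s+1+1) = Nat.choose (m+1) (s+2) := rfl
    rw [e1]
    omega


lemma sum_Icc_cnt (n : ℕ) : ∀ j, j ≤ n →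
    ∑ t ∈ Finset.Icc (2*n - j) (2*n), cnt (2*n) t = Nat.choose (2*n) (2*n - j) := by
  intro j
  induction j with
  | zero =>
    intro _
    simp only [Nat.sub_zero, Finset.Icc_self, Finset.sum_singleton]
    have := cnt_add_choose (m := 2*n) (t := 2*n) (by omega)
    rw [Nat.choose_eq_zero_of_lt (by omega)] at this
    omega
  | succ j ih =>
    intro hj
    have hins : Finset.Icc (2*n - (j+1)) (2*n) = insert (2*n - (j+1)) (Finset.Icc (2*n - j) (2*n)) := by
      ext t
      simp only [Finset.mem_Icc, Finset.mem_insert]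
      omega
    rw [hins, Finset.sum_insert (by simp; omega), ih (by omega)]
    have h1 : cnt (2*n) (2*n - (j+1)) + Nat.choose (2*n) ((2*n - (j+1)) + 1)
        = Nat.choose (2*n) (2*n - (j+1)) := cnt_add_choose (by omega)
    have h2 : (2*n - (j+1)) + 1 = 2*n - j := by omega
    rw [h2] at h1
    omega

lemma total_count (n : ℕ) :
    (Finset.univ.filter (fun F : Finset (Fin (2*n)) => okF F)).card = Nat.choose (2*n) n := by
  classical
  rw [Finset.card_eq_sum_card_fiberwise
    (f := fun F : Finset (Fin (2*n)) => F.card) (t := Finset.range (2*n+1))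
    (fun F _ => Finset.mem_range.2 (by
      show F.card < 2*n+1
      have := Finset.card_le_univ F
      simp at this
      omega))]
  have hfib : ∀ t ∈ Finset.range (2*n+1),
      ((Finset.univ.filter (fun F : Finset (Fin (2*n)) => okF F)).filter
        (fun F => F.card = t)).card = cnt (2*n) t := by
    intro t _
    rw [cnt, Finset.filter_filter]
  rw [Finset.sum_congr rfl hfib]
  have hsub : Finset.Icc n (2*n) ⊆ Finset.range (2*n+1) := by
    intro t ht
    simp only [Finset.mem_Icc] at ht
    exact Finset.mem_range.2 (by omega)
  rw [← Finset.sum_subset hsub (fun t ht hnt => by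
    simp only [Finset.mem_Icc] at hnt
    simp only [Finset.mem_range] at ht
    exact cnt_eq_zero_of_lt (by omega))]
  have := sum_Icc_cnt n n (le_refl n)
  have h2 : 2*n - n = n := by omega
  rw [h2] at this
  exact this


/-- Uniqueness of strictly monotone bijections between finsets of integers. -/
lemma strictMonoOn_unique :
    ∀ (S : Finset ℤ) (T : Finset ℤ) (f g : ℤ → ℤ), StrictMonoOn f (S : Set ℤ) →
      StrictMonoOn g (S : Set ℤ) → S.image f = T → S.image g = T → ∀ a ∈ S, f a = g a := by
  intro S
  induction S using Finset.strongInduction with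
  | _ S ih =>
    intro T f g hf hg hfT hgT a ha
    have hne : S.Nonempty := ⟨a, ha⟩
    set m := S.min' hne with hm
    have hmS : m ∈ S := S.min'_mem hne
    have hmin : ∀ f' : ℤ → ℤ, StrictMonoOn f' (S : Set ℤ) → S.image f' = T →
        f' m = T.min' (hfT ▸ (hne.image f)) := by
      intro f' hf' hf'T
      have h1 : f' m ∈ T := hf'T ▸ Finset.mem_image_of_mem f' hmS
      apply le_antisymm
      · apply Finset.le_min'
        intro t ht
        rw [← hf'T] at ht
        obtain ⟨s, hs, rfl⟩ := Finset.mem_image.1 ht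
        exact hf'.monotoneOn hmS hs (S.min'_le s hs)
      · exact Finset.min'_le _ _ h1
    have hfm := hmin f hf hfT
    have hgm := hmin g hg hgT
    rcases eq_or_ne a m with rfl | ham
    · rw [hfm, hgm]
    · have haS' : a ∈ S.erase m := Finset.mem_erase.2 ⟨ham, ha⟩
      have hsub : S.erase m ⊂ S := Finset.erase_ssubset hmS
      have himgf : (S.erase m).image f = T.erase (f m) := by
        ext y
        simp only [Finset.mem_image, Finset.mem_erase]
        constructor
        · rintro ⟨s, ⟨hsm, hsS⟩, rfl⟩
          refine ⟨fun h => hsm (hf.injOn hsS hmS h), hfT ▸ Finset.mem_image_of_mem f hsS⟩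
        · rintro ⟨hym, hyT⟩
          rw [← hfT] at hyT
          obtain ⟨s, hs, rfl⟩ := Finset.mem_image.1 hyT
          exact ⟨s, ⟨fun h => hym (h ▸ rfl), hs⟩, rfl⟩
      have himgg : (S.erase m).image g = T.erase (f m) := by
        rw [hfm, ← hgm]
        ext y
        simp only [Finset.mem_image, Finset.mem_erase]
        constructor
        · rintro ⟨s, ⟨hsm, hsS⟩, rfl⟩
          refine ⟨fun h => hsm (hg.injOn hsS hmS h), hgT ▸ Finset.mem_image_of_mem g hsS⟩
        · rintro ⟨hym, hyT⟩
          rw [← hgT] at hyT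
          obtain ⟨s, hs, rfl⟩ := Finset.mem_image.1 hyT
          exact ⟨s, ⟨fun h => hym (h ▸ rfl), hs⟩, rfl⟩
      exact ih (S.erase m) hsub (T.erase (f m)) f g
        (hf.mono (by simp [Finset.coe_subset, Finset.erase_subset]))
        (hg.mono (by simp [Finset.coe_subset, Finset.erase_subset]))
        himgf himgg a haS'

/-- Ballot condition implies each opener precedes its closer. -/
lemma lt_apply_of_ballot {S T : Finset ℤ} {f : ℤ → ℤ}
    (hf : StrictMonoOn f (S : Set ℤ)) (hfT : S.image f = T) (hST : Disjoint S T)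
    (hb : ∀ x : ℤ, (T.filter (· ≤ x)).card ≤ (S.filter (· ≤ x)).card) :
    ∀ a ∈ S, a < f a := by
  intro a ha
  have hfa : f a ∈ T := hfT ▸ Finset.mem_image_of_mem f ha
  have hne : f a ≠ a := fun h => (Finset.disjoint_left.1 hST) ha (h ▸ hfa)
  by_contra hcon
  push_neg at hcon
  have hlt : f a < a := lt_of_le_of_ne hcon hne
  set x := f a with hx
  set A := S.filter (fun s => f s ≤ x) with hA
  set B := S.filter (fun s => s < a) with hB
  have hTA : (T.filter (· ≤ x)).card = A.card := by
    rw [← hfT, Finset.filter_image]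
    apply Finset.card_image_of_injOn
    exact hf.injOn.mono (Finset.coe_subset.2 (Finset.filter_subset _ _))
  have hBA : insert a B ⊆ A := by
    intro s hs
    rcases Finset.mem_insert.1 hs with rfl | hsB
    · exact Finset.mem_filter.2 ⟨ha, le_refl _⟩
    · obtain ⟨hsS, hsa⟩ := Finset.mem_filter.1 hsB
      exact Finset.mem_filter.2 ⟨hsS, (hf hsS ha hsa).le⟩
  have haB : a ∉ B := by simp [hB]
  have h1 : B.card + 1 ≤ A.card := by
    have := Finset.card_le_card hBA
    rwa [Finset.card_insert_of_notMem haB] at this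
  have h2 : (S.filter (· ≤ x)).card ≤ B.card := by
    apply Finset.card_le_card
    intro s hs
    obtain ⟨hsS, hsx⟩ := Finset.mem_filter.1 hs
    exact Finset.mem_filter.2 ⟨hsS, lt_of_le_of_lt hsx hlt⟩
  have h3 := hb x
  omega

end SNN

namespace SNN2
open SNN

lemma card_filter_or (s : Finset ℤ) (p q r : ℤ → Prop)
    [DecidablePred p] [DecidablePred q] [DecidablePred r]
    (h : ∀ a ∈ s, (p a ↔ q a ∨ r a)) (hd : ∀ a ∈ s, ¬(q a ∧ r a)) :
    (s.filter p).card = (s.filter q).card + (s.filter r).card := by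
  have h1 : s.filter p = s.filter q ∪ s.filter r := by
    rw [← Finset.filter_or]
    exact Finset.filter_congr h
  rw [h1, Finset.card_union_of_disjoint]
  exact Finset.disjoint_left.2 fun a haq har =>
    hd a (Finset.mem_filter.1 haq).1 ⟨(Finset.mem_filter.1 haq).2, (Finset.mem_filter.1 har).2⟩

lemma card_filter_neg_bij {s t : Finset ℤ} (p q : ℤ → Prop)
    [DecidablePred p] [DecidablePred q]
    (hsymm : ∀ a : ℤ, a ∈ s ↔ -a ∈ t) (hpq : ∀ a : ℤ, p a ↔ q (-a)) :
    (s.filter p).card = (t.filter q).card := by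
  apply Finset.card_nbij' (i := fun a => -a) (j := fun a => -a)
  · intro a ha
    obtain ⟨h1, h2⟩ := Finset.mem_filter.1 ha
    exact Finset.mem_filter.2 ⟨(hsymm a).1 h1, (hpq a).1 h2⟩
  · intro a ha
    obtain ⟨h1, h2⟩ := Finset.mem_filter.1 ha
    refine Finset.mem_filter.2 ⟨?_, ?_⟩
    · have := (hsymm (-a)).2; rw [neg_neg] at this; exact this h1
    · have := (hpq (-a)).2; rw [neg_neg] at this; exact this h2
  · intro a _; exact neg_neg a
  · intro a _; exact neg_neg a

lemma full_ballot_of_half {S T : Finset ℤ}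
    (hdisj : Disjoint S T)
    (hsymm : ∀ a : ℤ, a ∈ S ↔ -a ∈ T)
    (hhalf : ∀ x : ℤ, x < 0 → (T.filter (· ≤ x)).card ≤ (S.filter (· ≤ x)).card) :
    ∀ x : ℤ, (T.filter (· ≤ x)).card ≤ (S.filter (· ≤ x)).card := by
  intro x
  rcases lt_or_ge x 0 with hx | hx
  · exact hhalf x hx
  have h0S : (0:ℤ) ∉ S := by
    intro h
    have h2 : (0:ℤ) ∈ T := by have := (hsymm 0).1 h; simpa using this
    exact Finset.disjoint_left.1 hdisj h h2
  have h0T : (0:ℤ) ∉ T := by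
    intro h
    have h2 : (0:ℤ) ∈ S := by have := (hsymm 0).2 (by simpa using h); exact this
    exact Finset.disjoint_left.1 hdisj h2 h
  have hsymm' : ∀ a : ℤ, a ∈ T ↔ -a ∈ S := by
    intro a
    have := hsymm (-a); rw [neg_neg] at this; exact this.symm
  have e1 : (S.filter (· ≤ x)).card
      = (S.filter (· ≤ -1)).card + (S.filter (fun a => 1 ≤ a ∧ a ≤ x)).card :=
    card_filter_or _ _ _ _
      (fun a ha => by
        have : a ≠ 0 := fun h => h0S (h ▸ ha)
        omega)
      (fun a _ => by omega)
  have e2 : (T.filter (· ≤ x)).card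
      = (T.filter (· ≤ -1)).card + (T.filter (fun a => 1 ≤ a ∧ a ≤ x)).card :=
    card_filter_or _ _ _ _
      (fun a ha => by
        have : a ≠ 0 := fun h => h0T (h ▸ ha)
        omega)
      (fun a _ => by omega)
  have e3 : (S.filter (fun a => 1 ≤ a ∧ a ≤ x)).card
      = (T.filter (fun a => -x ≤ a ∧ a ≤ -1)).card :=
    card_filter_neg_bij _ _ hsymm (fun a => by omega)
  have e4 : (T.filter (fun a => 1 ≤ a ∧ a ≤ x)).card
      = (S.filter (fun a => -x ≤ a ∧ a ≤ -1)).card :=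
    card_filter_neg_bij _ _ hsymm' (fun a => by omega)
  have e5 : (S.filter (· ≤ -1)).card
      = (S.filter (· ≤ -x-1)).card + (S.filter (fun a => -x ≤ a ∧ a ≤ -1)).card :=
    card_filter_or _ _ _ _ (fun a _ => by omega) (fun a _ => by omega)
  have e6 : (T.filter (· ≤ -1)).card
      = (T.filter (· ≤ -x-1)).card + (T.filter (fun a => -x ≤ a ∧ a ≤ -1)).card :=
    card_filter_or _ _ _ _ (fun a _ => by omega) (fun a _ => by omega)
  have e7 := hhalf (-x-1) (by omega)
  omega

end SNN2

namespace SNN3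
open SNN SNN2

noncomputable def iota (S T : Finset ℤ) {k : ℕ} (hS : S.card = k) (hT : T.card = k) : ℤ → ℤ :=
  fun a => if h : a ∈ S then ((T.orderIsoOfFin hT) ((S.orderIsoOfFin hS).symm ⟨a, h⟩) : ℤ) else 0

variable {S T : Finset ℤ} {k : ℕ} (hS : S.card = k) (hT : T.card = k)

lemma iota_eq {a : ℤ} (h : a ∈ S) :
    iota S T hS hT a = ((T.orderIsoOfFin hT) ((S.orderIsoOfFin hS).symm ⟨a, h⟩) : ℤ) :=
  dif_pos h

lemma iota_mem {a : ℤ} (ha : a ∈ S) : iota S T hS hT a ∈ T := by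
  rw [iota, dif_pos ha]
  exact ((T.orderIsoOfFin hT) ((S.orderIsoOfFin hS).symm ⟨a, ha⟩)).2

lemma iota_strictMonoOn : StrictMonoOn (iota S T hS hT) (S : Set ℤ) := by
  intro a ha b hb hab
  have ha' : a ∈ S := ha
  have hb' : b ∈ S := hb
  simp only [iota, dif_pos ha', dif_pos hb']
  have h1 : ((S.orderIsoOfFin hS).symm ⟨a, ha⟩) < ((S.orderIsoOfFin hS).symm ⟨b, hb⟩) := by
    rw [OrderIso.lt_iff_lt]
    exact Subtype.mk_lt_mk.2 hab
  have h2 := (T.orderIsoOfFin hT).lt_iff_lt.2 h1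
  exact_mod_cast h2

lemma iota_image : S.image (iota S T hS hT) = T := by
  apply Finset.eq_of_subset_of_card_le
  · intro y hy
    obtain ⟨a, ha, rfl⟩ := Finset.mem_image.1 hy
    exact iota_mem hS hT ha
  · rw [Finset.card_image_of_injOn (iota_strictMonoOn hS hT).injOn, hS, hT]

lemma iota_inv {a : ℤ} (ha : a ∈ S) :
    iota T S hT hS (iota S T hS hT a) = a := by
  have hmem := iota_mem hS hT ha
  have h1 : (⟨iota S T hS hT a, hmem⟩ : {x // x ∈ T})
      = (T.orderIsoOfFin hT) ((S.orderIsoOfFin hS).symm ⟨a, ha⟩) := by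
    apply Subtype.ext
    simp only [iota, dif_pos ha]
  rw [iota_eq hT hS hmem, h1, OrderIso.symm_apply_apply, OrderIso.apply_symm_apply]

lemma iota_neg (hsymm : ∀ a : ℤ, a ∈ S ↔ -a ∈ T) :
    ∀ a ∈ S, iota S T hS hT (-(iota S T hS hT a)) = -a := by
  have hsymm' : ∀ a : ℤ, a ∈ T ↔ -a ∈ S := by
    intro a; have := hsymm (-a); rw [neg_neg] at this; exact this.symm
  have key : ∀ a ∈ S, iota S T hS hT a = -(iota T S hT hS (-a)) := by
    apply strictMonoOn_unique S T _ _ (iota_strictMonoOn hS hT)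
    · -- strict mono of g
      intro a ha b hb hab
      have haT : -a ∈ T := (hsymm a).1 ha
      have hbT : -b ∈ T := (hsymm b).1 hb
      have := iota_strictMonoOn hT hS hbT haT (by omega)
      show -(iota T S hT hS (-a)) < -(iota T S hT hS (-b))
      omega
    · exact iota_image hS hT
    · -- image of g = T
      apply Finset.eq_of_subset_of_card_le
      · intro y hy
        obtain ⟨a, ha, rfl⟩ := Finset.mem_image.1 hy
        have haT : -a ∈ T := (hsymm a).1 ha
        have : iota T S hT hS (-a) ∈ S := iota_mem hT hS haT
        have := (hsymm _).1 this
        exact this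
      · rw [Finset.card_image_of_injOn, hS, hT]
        intro a ha b hb hab
        simp only at hab
        have haT : -a ∈ T := (hsymm a).1 (by exact_mod_cast ha)
        have hbT : -b ∈ T := (hsymm b).1 (by exact_mod_cast hb)
        have : iota T S hT hS (-a) = iota T S hT hS (-b) := by omega
        have h2 := (iota_strictMonoOn hT hS).injOn haT hbT this
        omega
  intro a ha
  have h1 : iota S T hS hT a ∈ T := iota_mem hS hT ha
  have h2 : -(iota S T hS hT a) ∈ S := (hsymm' _).1 h1
  rw [key _ h2, neg_neg, iota_inv hS hT ha]

end SNN3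


namespace SNN4
open SNN SNN2 SNN3

variable (n : ℕ)

noncomputable def Xf : Finset ℤ := (Finset.Icc (-(2*(n:ℤ))) (2*(n:ℤ))).erase 0

lemma mem_Xf {a : ℤ} : a ∈ Xf n ↔ a ≠ 0 ∧ |a| ≤ 2*(n:ℤ) := by
  rw [Xf, Finset.mem_erase, Finset.mem_Icc, abs_le]

lemma neg_mem_Xf {a : ℤ} (h : a ∈ Xf n) : -a ∈ Xf n := by
  rw [mem_Xf] at h ⊢
  rw [abs_neg]
  exact ⟨by omega, h.2⟩

lemma card_Xf : (Xf n).card = 4*n := by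
  rw [Xf, Finset.card_erase_of_mem (by rw [Finset.mem_Icc]; omega), Int.card_Icc]
  have h : (2*(n:ℤ) + 1 - (-(2*(n:ℤ)))) = (4*n+1 : ℕ) := by push_cast; ring
  rw [h, Int.toNat_natCast]
  omega

def enc (i : Fin (2*n)) : ℤ := (i : ℤ) - 2*n

lemma enc_lt_zero (i : Fin (2*n)) : enc n i < 0 := by
  have := i.isLt; simp only [enc]; omega

lemma enc_ge (i : Fin (2*n)) : -(2*(n:ℤ)) ≤ enc n i := by
  simp only [enc]; omega

lemma enc_inj : Function.Injective (enc n) := by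
  intro i j h
  simp only [enc] at h
  exact Fin.ext (by omega)

lemma enc_le_enc {i j : Fin (2*n)} : enc n i ≤ enc n j ↔ i ≤ j := by
  simp only [enc]
  constructor
  · intro h; exact Fin.le_def.2 (by omega)
  · intro h; have := Fin.le_def.1 h; omega

lemma exists_enc {a : ℤ} (h1 : -(2*(n:ℤ)) ≤ a) (h2 : a ≤ -1) :
    ∃ i : Fin (2*n), enc n i = a := by
  refine ⟨⟨(a + 2*n).toNat, by omega⟩, ?_⟩
  have h3 : ((a + 2*(n:ℤ)).toNat : ℤ) = a + 2*n := Int.toNat_of_nonneg (by omega)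
  show ((((a + 2*n).toNat : ℕ) : ℤ)) - 2*n = a
  omega

lemma enc_mem_Xf (i : Fin (2*n)) : enc n i ∈ Xf n := by
  rw [mem_Xf]
  have h1 := enc_lt_zero n i
  have h2 := enc_ge n i
  constructor
  · omega
  · rw [abs_of_neg h1]; omega

variable (F : Finset (Fin (2*n)))

def SF : Finset ℤ := F.image (enc n) ∪ (Finset.univ \ F).image (fun i => -(enc n i))

lemma mem_SF_neg {a : ℤ} (ha : a < 0) : a ∈ SF n F ↔ ∃ i ∈ F, enc n i = a := by
  simp only [SF, Finset.mem_union, Finset.mem_image, Finset.mem_sdiff, Finset.mem_univ, true_and]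
  constructor
  · rintro (h | ⟨i, hi, rfl⟩)
    · exact h
    · exact absurd ha (by have := enc_lt_zero n i; omega)
  · exact Or.inl

lemma mem_SF_pos {a : ℤ} (ha : 0 < a) : a ∈ SF n F ↔ ∃ i, i ∉ F ∧ -(enc n i) = a := by
  simp only [SF, Finset.mem_union, Finset.mem_image, Finset.mem_sdiff, Finset.mem_univ, true_and]
  constructor
  · rintro (⟨i, hi, rfl⟩ | h)
    · exact absurd ha (by have := enc_lt_zero n i; omega)
    · exact h
  · exact Or.inr

lemma SF_subset : SF n F ⊆ Xf n := by
  intro a ha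
  simp only [SF, Finset.mem_union, Finset.mem_image] at ha
  rcases ha with ⟨i, _, rfl⟩ | ⟨i, _, rfl⟩
  · exact enc_mem_Xf n i
  · exact neg_mem_Xf n (enc_mem_Xf n i)

lemma card_SF : (SF n F).card = 2*n := by
  rw [SF, Finset.card_union_of_disjoint]
  · rw [Finset.card_image_of_injective _ (enc_inj n),
      Finset.card_image_of_injective _ (fun i j h => enc_inj n (by omega : enc n i = enc n j))]
    have h1 : (Finset.univ \ F).card = 2*n - F.card := by
      rw [Finset.card_sdiff_of_subset (Finset.subset_univ F), Finset.card_univ, Fintype.card_fin]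
    have h2 : F.card ≤ 2*n := by
      have := Finset.card_le_univ F
      rwa [Fintype.card_fin] at this
    omega
  · rw [Finset.disjoint_left]
    rintro a ha hb
    simp only [Finset.mem_image] at ha hb
    obtain ⟨i, _, rfl⟩ := ha
    obtain ⟨j, _, hj⟩ := hb
    have h1 := enc_lt_zero n i
    have h2 := enc_lt_zero n j
    omega

noncomputable def TF : Finset ℤ := Xf n \ SF n F

lemma card_TF : (TF n F).card = 2*n := by
  rw [TF, Finset.card_sdiff_of_subset (SF_subset n F), card_Xf, card_SF]
  omega

lemma disjoint_SF_TF : Disjoint (SF n F) (TF n F) := Finset.disjoint_sdiff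

lemma symm_SF : ∀ a : ℤ, a ∈ SF n F ↔ -a ∈ TF n F := by
  intro a
  rcases lt_trichotomy a 0 with ha | rfl | ha
  · -- a < 0
    constructor
    · intro h
      obtain ⟨i, hiF, rfl⟩ := (mem_SF_neg n F ha).1 h
      rw [TF, Finset.mem_sdiff]
      refine ⟨neg_mem_Xf n (enc_mem_Xf n i), ?_⟩
      intro hc
      obtain ⟨j, hjF, hj⟩ := (mem_SF_pos n F (by have := enc_lt_zero n i; omega)).1 hc
      have : j = i := enc_inj n (by omega)
      exact hjF (this ▸ hiF)
    · intro h
      rw [TF, Finset.mem_sdiff] at h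
      obtain ⟨hXf, hnS⟩ := h
      have haXf : a ∈ Xf n := by
        have := neg_mem_Xf n hXf; rwa [neg_neg] at this
      rw [mem_Xf] at haXf
      obtain ⟨i, hi⟩ := exists_enc n (a := a)
        (by have := haXf.2; rw [abs_of_neg ha] at this; omega) (by omega)
      rw [mem_SF_neg n F ha]
      refine ⟨i, ?_, hi⟩
      by_contra hiF
      exact hnS ((mem_SF_pos n F (by omega)).2 ⟨i, hiF, by omega⟩)
  · -- a = 0
    constructor
    · intro h
      have := mem_Xf n |>.1 (SF_subset n F h)
      simp at this
    · intro h
      rw [TF, Finset.mem_sdiff, mem_Xf] at h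
      simp at h
  · -- a > 0
    constructor
    · intro h
      obtain ⟨i, hiF, hi⟩ := (mem_SF_pos n F ha).1 h
      rw [TF, Finset.mem_sdiff]
      have henc : enc n i = -a := by omega
      refine ⟨henc ▸ enc_mem_Xf n i, ?_⟩
      intro hc
      obtain ⟨j, hjF, hj⟩ := (mem_SF_neg n F (by omega)).1 hc
      have : j = i := enc_inj n (by omega)
      exact hiF (this ▸ hjF)
    · intro h
      rw [TF, Finset.mem_sdiff] at h
      obtain ⟨hXf, hnS⟩ := h
      rw [mem_Xf] at hXf
      obtain ⟨i, hi⟩ := exists_enc n (a := -a)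
        (by have := hXf.2; rw [abs_of_neg (by omega : -a < 0)] at this; omega) (by omega)
      rw [mem_SF_pos n F ha]
      refine ⟨i, ?_, by omega⟩
      intro hiF
      exact hnS ((mem_SF_neg n F (by omega)).2 ⟨i, hiF, hi⟩)

lemma half_ballot (hok : okF F) :
    ∀ x : ℤ, x < 0 → ((TF n F).filter (· ≤ x)).card ≤ ((SF n F).filter (· ≤ x)).card := by
  intro x hx
  rcases lt_or_ge x (-(2*(n:ℤ))) with hlo | hlo
  · have hempty : (TF n F).filter (· ≤ x) = ∅ := by
      rw [Finset.filter_eq_empty_iff]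
      intro a ha
      have : a ∈ Xf n := (Finset.sdiff_subset : TF n F ⊆ Xf n) ha
      rw [mem_Xf] at this
      have := this.2
      have h2 := abs_le.1 this
      omega
    rw [hempty]
    simp
  · obtain ⟨k, hk⟩ := exists_enc n (a := x) hlo (by omega)
    have c1 : (F ∩ Finset.Iic k).card = ((SF n F).filter (· ≤ x)).card := by
      apply Finset.card_nbij (i := enc n)
      · intro i hi
        obtain ⟨hiF, hik⟩ := Finset.mem_inter.1 hi
        refine Finset.mem_filter.2 ⟨(mem_SF_neg n F (enc_lt_zero n i)).2 ⟨i, hiF, rfl⟩, ?_⟩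
        rw [← hk]
        exact (enc_le_enc n).2 (Finset.mem_Iic.1 hik)
      · exact (enc_inj n).injOn
      · intro a ha
        simp only [Finset.coe_filter, Set.mem_setOf_eq] at ha
        obtain ⟨haS, hax⟩ := ha
        obtain ⟨i, hiF, rfl⟩ := (mem_SF_neg n F (by omega)).1 haS
        refine ⟨i, ?_, rfl⟩
        simp only [Finset.coe_inter, Set.mem_inter_iff, Finset.mem_coe, Finset.mem_Iic]
        rw [← hk] at hax
        exact ⟨hiF, (enc_le_enc n).1 hax⟩
    have c2 : ((Finset.univ \ F) ∩ Finset.Iic k).card = ((TF n F).filter (· ≤ x)).card := by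
      apply Finset.card_nbij (i := enc n)
      · intro i hi
        obtain ⟨hiF, hik⟩ := Finset.mem_inter.1 hi
        have hiF' : i ∉ F := (Finset.mem_sdiff.1 hiF).2
        refine Finset.mem_filter.2 ⟨Finset.mem_sdiff.2 ⟨enc_mem_Xf n i, ?_⟩, ?_⟩
        · intro hc
          obtain ⟨j, hjF, hj⟩ := (mem_SF_neg n F (enc_lt_zero n i)).1 hc
          exact hiF' ((enc_inj n hj) ▸ hjF)
        · rw [← hk]
          exact (enc_le_enc n).2 (Finset.mem_Iic.1 hik)
      · exact (enc_inj n).injOn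
      · intro a ha
        simp only [Finset.coe_filter, Set.mem_setOf_eq] at ha
        obtain ⟨haT, hax⟩ := ha
        obtain ⟨hXf, hnS⟩ := Finset.mem_sdiff.1 haT
        have ha0 : a < 0 := by omega
        rw [mem_Xf] at hXf
        obtain ⟨i, rfl⟩ := exists_enc n (a := a)
          (by have := abs_le.1 hXf.2; omega) (by omega)
        refine ⟨i, ?_, rfl⟩
        simp only [Finset.coe_inter, Set.mem_inter_iff, Finset.mem_coe, Finset.mem_Iic,
          Finset.mem_sdiff, Finset.mem_univ, true_and]
        refine ⟨?_, ?_⟩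
        · intro hiF
          exact hnS ((mem_SF_neg n F ha0).2 ⟨i, hiF, rfl⟩)
        · rw [← hk] at hax
          exact (enc_le_enc n).1 hax
    have c3 : (F ∩ Finset.Iic k).card + ((Finset.univ \ F) ∩ Finset.Iic k).card
        = k.val + 1 := by
      rw [← Fin.card_Iic k]
      rw [← Finset.card_union_of_disjoint]
      · congr 1
        rw [← Finset.union_inter_distrib_right]
        rw [Finset.union_sdiff_of_subset (Finset.subset_univ F), Finset.univ_inter]
      · exact Finset.disjoint_left.2 fun i hi hj =>
          (Finset.mem_sdiff.1 (Finset.mem_inter.1 hj).1).2 (Finset.mem_inter.1 hi).1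
    have hk1 := hok k
    omega

noncomputable def iotaF : ℤ → ℤ := iota (SF n F) (TF n F) (card_SF n F) (card_TF n F)

lemma iotaF_stm : StrictMonoOn (iotaF n F) (SF n F : Set ℤ) :=
  iota_strictMonoOn _ _

lemma iotaF_img : (SF n F).image (iotaF n F) = TF n F := iota_image _ _

lemma iotaF_mem {a : ℤ} (h : a ∈ SF n F) : iotaF n F a ∈ TF n F := iota_mem _ _ h

lemma iotaF_neg {a : ℤ} (h : a ∈ SF n F) : iotaF n F (-(iotaF n F a)) = -a :=
  iota_neg _ _ (symm_SF n F) a h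

lemma full_ballot (hok : okF F) :
    ∀ x : ℤ, ((TF n F).filter (· ≤ x)).card ≤ ((SF n F).filter (· ≤ x)).card :=
  full_ballot_of_half (disjoint_SF_TF n F) (symm_SF n F) (half_ballot n F hok)

lemma lt_iotaF (hok : okF F) : ∀ a ∈ SF n F, a < iotaF n F a :=
  lt_apply_of_ballot (iotaF_stm n F) (iotaF_img n F) (disjoint_SF_TF n F) (full_ballot n F hok)

def Xset : Set ℤ := {a : ℤ | a ≠ 0 ∧ |a| ≤ 2 * (n : ℤ)}

lemma mem_Xf_iff_Xset {a : ℤ} : a ∈ Xf n ↔ a ∈ Xset n := mem_Xf n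

def PF : Set (Set ℤ) := {B | ∃ s ∈ SF n F, B = ({s, iotaF n F s} : Set ℤ)}

lemma set_pair_eq {a b c d : ℤ} (h : ({a,b} : Set ℤ) = {c,d}) (hab : a < b) (hcd : c < d) :
    a = c ∧ b = d := by
  have h1 : a ∈ ({c,d} : Set ℤ) := h ▸ (by simp)
  have h2 : b ∈ ({c,d} : Set ℤ) := h ▸ (by simp)
  have h3 : c ∈ ({a,b} : Set ℤ) := h.symm ▸ (by simp)
  have h4 : d ∈ ({a,b} : Set ℤ) := h.symm ▸ (by simp)
  simp only [Set.mem_insert_iff, Set.mem_singleton_iff] at h1 h2 h3 h4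
  omega

lemma PF_sub : ∀ B ∈ PF n F, B ⊆ Xset n := by
  rintro B ⟨s, hs, rfl⟩ a ha
  rcases ha with rfl | ha
  · exact (mem_Xf n).1 (SF_subset n F hs)
  · rw [Set.mem_singleton_iff] at ha
    subst ha
    exact (mem_Xf n).1 ((Finset.sdiff_subset) (iotaF_mem n F hs))

lemma PF_cover : (⋃ B ∈ PF n F, B) = Xset n := by
  ext a
  simp only [Set.mem_iUnion, exists_prop]
  constructor
  · rintro ⟨B, hB, haB⟩
    exact PF_sub n F B hB haB
  · intro ha
    have haXf : a ∈ Xf n := (mem_Xf n).2 ha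
    by_cases hS : a ∈ SF n F
    · exact ⟨{a, iotaF n F a}, ⟨a, hS, rfl⟩, by simp⟩
    · have haT : a ∈ TF n F := Finset.mem_sdiff.2 ⟨haXf, hS⟩
      rw [← iotaF_img n F] at haT
      obtain ⟨s, hs, rfl⟩ := Finset.mem_image.1 haT
      exact ⟨{s, iotaF n F s}, ⟨s, hs, rfl⟩, by simp⟩

lemma PF_disj : (PF n F).PairwiseDisjoint id := by
  rintro B ⟨s, hs, rfl⟩ B' ⟨s', hs', rfl⟩ hne
  have hss' : s ≠ s' := fun h => hne (by rw [h])
  rw [Function.onFun, id, id, Set.disjoint_left]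
  have hST := disjoint_SF_TF n F
  rintro a (rfl | ha) hb
  · rcases hb with rfl | hb
    · exact hss' rfl
    · rw [Set.mem_singleton_iff] at hb
      subst hb
      exact Finset.disjoint_left.1 hST hs (iotaF_mem n F hs')
  · rw [Set.mem_singleton_iff] at ha
    subst ha
    rcases hb with hb | hb
    · exact Finset.disjoint_left.1 hST (hb ▸ hs') (iotaF_mem n F hs)
    · rw [Set.mem_singleton_iff] at hb
      exact hss' ((iotaF_stm n F).injOn hs hs' hb)

lemma PF_card : ∀ B ∈ PF n F, Set.ncard B = 2 := by
  rintro B ⟨s, hs, rfl⟩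
  apply Set.ncard_pair
  intro h
  exact Finset.disjoint_left.1 (disjoint_SF_TF n F) hs (h ▸ iotaF_mem n F hs)

lemma PF_symm : ∀ B ∈ PF n F, (fun a : ℤ => -a) '' B ∈ PF n F := by
  rintro B ⟨s, hs, rfl⟩
  rw [Set.image_pair]
  have h1 : -(iotaF n F s) ∈ SF n F := by
    have := (symm_SF n F (-(iotaF n F s))).2
    rw [neg_neg] at this
    exact this (iotaF_mem n F hs)
  refine ⟨-(iotaF n F s), h1, ?_⟩
  rw [iotaF_neg n F hs, Set.pair_comm]

lemma PF_nonnest (hok : okF F) : ∀ a b c d : ℤ, ({a, b} : Set ℤ) ∈ PF n F →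
    ({c, d} : Set ℤ) ∈ PF n F → a < c → c < d → d < b → False := by
  intro a b c d hab hcd h1 h2 h3
  obtain ⟨s, hs, hseq⟩ := hab
  obtain ⟨s', hs', hseq'⟩ := hcd
  have hlt := lt_iotaF n F hok s hs
  have hlt' := lt_iotaF n F hok s' hs'
  obtain ⟨rfl, rfl⟩ := set_pair_eq hseq (by omega) hlt
  obtain ⟨rfl, rfl⟩ := set_pair_eq hseq' h2 hlt'
  have := iotaF_stm n F hs hs' h1
  omega


section Extract

variable (P : Set (Set ℤ))

open Classical in
noncomputable def pa : ℤ → ℤ := fun a =>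
  if h : ∃ b, b ≠ a ∧ ({a, b} : Set ℤ) ∈ P then h.choose else 0

variable {P}
variable (hP1 : ∀ B ∈ P, B ⊆ Xset n)
variable (hP2 : (⋃ B ∈ P, B) = Xset n)
variable (hP3 : P.PairwiseDisjoint id)
variable (hP4 : ∀ B ∈ P, Set.ncard B = 2)
variable (hP5 : ∀ B ∈ P, (fun a : ℤ => -a) '' B ∈ P)
variable (hP6 : ∀ a b c d : ℤ, ({a, b} : Set ℤ) ∈ P → ({c, d} : Set ℤ) ∈ P →
    a < c → c < d → d < b → False)

include hP2 hP4 in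
lemma exists_partner {a : ℤ} (ha : a ∈ Xset n) :
    ∃ b, b ≠ a ∧ ({a, b} : Set ℤ) ∈ P := by
  rw [← hP2] at ha
  simp only [Set.mem_iUnion, exists_prop] at ha
  obtain ⟨B, hB, haB⟩ := ha
  obtain ⟨x, y, hxy, rfl⟩ := Set.ncard_eq_two.1 (hP4 B hB)
  rcases haB with rfl | haB
  · exact ⟨y, fun h => hxy h.symm, hB⟩
  · rw [Set.mem_singleton_iff] at haB
    subst haB
    exact ⟨x, fun h => hxy h, by rwa [Set.pair_comm]⟩

include hP3 in
lemma partner_unique {a b c : ℤ} (hb : ({a, b} : Set ℤ) ∈ P) (hc : ({a, c} : Set ℤ) ∈ P)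
    (hbne : b ≠ a) (hcne : c ≠ a) : b = c := by
  have heq : ({a, b} : Set ℤ) = {a, c} := by
    by_contra hne
    have := hP3 hb hc hne
    rw [Function.onFun, id, id, Set.disjoint_left] at this
    exact this (Set.mem_insert a _) (Set.mem_insert a _)
  have : b ∈ ({a, c} : Set ℤ) := heq ▸ (by simp)
  rcases this with h | h
  · exact absurd h hbne
  · exact h

include hP2 hP4 in
lemma pa_spec {a : ℤ} (ha : a ∈ Xset n) :
    pa P a ≠ a ∧ ({a, pa P a} : Set ℤ) ∈ P := by
  rw [pa, dif_pos (exists_partner n hP2 hP4 ha)]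
  exact (exists_partner n hP2 hP4 ha).choose_spec

include hP2 hP3 hP4 in
lemma pa_eq {a b : ℤ} (hab : ({a, b} : Set ℤ) ∈ P) (hne : b ≠ a) (ha : a ∈ Xset n) :
    pa P a = b := by
  obtain ⟨h1, h2⟩ := pa_spec n hP2 hP4 ha
  exact partner_unique hP3 h2 hab h1 hne

include hP1 hP2 hP4 in
lemma pa_mem {a : ℤ} (ha : a ∈ Xset n) : pa P a ∈ Xset n := by
  obtain ⟨h1, h2⟩ := pa_spec n hP2 hP4 ha
  exact hP1 _ h2 (by simp)

include hP1 hP2 hP3 hP4 in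
lemma pa_invol {a : ℤ} (ha : a ∈ Xset n) : pa P (pa P a) = a := by
  obtain ⟨h1, h2⟩ := pa_spec n hP2 hP4 ha
  exact pa_eq n hP2 hP3 hP4 (by rwa [Set.pair_comm]) (fun h => h1 h.symm)
    (hP1 _ h2 (by simp))

include hP1 hP2 hP3 hP4 hP5 in
lemma pa_neg {a : ℤ} (ha : a ∈ Xset n) : pa P (-a) = -(pa P a) := by
  obtain ⟨h1, h2⟩ := pa_spec n hP2 hP4 ha
  have h3 := hP5 _ h2
  rw [Set.image_pair] at h3
  apply pa_eq n hP2 hP3 hP4 h3 (by omega)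
  rw [Xset, Set.mem_setOf_eq] at ha ⊢
  rw [abs_neg]
  exact ⟨by omega, ha.2⟩

variable (P) in
noncomputable def SP : Finset ℤ := (Xf n).filter (fun a => a < pa P a)

variable (P) in
noncomputable def TP : Finset ℤ := Xf n \ SP n P

lemma mem_SP {a : ℤ} : a ∈ SP n P ↔ a ∈ Xf n ∧ a < pa P a := Finset.mem_filter

include hP1 hP2 hP3 hP4 hP6 in
lemma pa_stm : StrictMonoOn (pa P) (SP n P : Set ℤ) := by
  intro a ha b hb hab
  rw [Finset.mem_coe, mem_SP] at ha hb
  obtain ⟨haX, hap⟩ := ha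
  obtain ⟨hbX, hbp⟩ := hb
  have haX' := (mem_Xf_iff_Xset n).1 haX
  have hbX' := (mem_Xf_iff_Xset n).1 hbX
  obtain ⟨ha1, ha2⟩ := pa_spec n hP2 hP4 haX'
  obtain ⟨hb1, hb2⟩ := pa_spec n hP2 hP4 hbX'
  rcases lt_trichotomy (pa P a) (pa P b) with h | h | h
  · exact h
  · exfalso
    have hia := pa_invol n hP1 hP2 hP3 hP4 haX'
    have hib := pa_invol n hP1 hP2 hP3 hP4 hbX'
    rw [h] at hia
    omega
  · exact absurd (hP6 a (pa P a) b (pa P b) ha2 hb2 hab hbp h) (fun h => h)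

include hP1 hP2 hP3 hP4 in
lemma pa_img : (SP n P).image (pa P) = TP n P := by
  ext t
  simp only [Finset.mem_image, TP, Finset.mem_sdiff, mem_SP]
  constructor
  · rintro ⟨a, ⟨haX, hap⟩, rfl⟩
    have haX' := (mem_Xf_iff_Xset n).1 haX
    have hmem := pa_mem n hP1 hP2 hP4 haX'
    have hinv := pa_invol n hP1 hP2 hP3 hP4 haX'
    refine ⟨(mem_Xf_iff_Xset n).2 hmem, ?_⟩
    rintro ⟨-, hlt⟩
    omega
  · rintro ⟨htX, htS⟩
    have htX' := (mem_Xf_iff_Xset n).1 htX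
    obtain ⟨ht1, _⟩ := pa_spec n hP2 hP4 htX'
    have hplt : pa P t < t := by
      rcases lt_trichotomy t (pa P t) with h | h | h
      · exact absurd ⟨htX, h⟩ htS
      · exact absurd h.symm ht1
      · exact h
    have hmem := pa_mem n hP1 hP2 hP4 htX'
    have hinv := pa_invol n hP1 hP2 hP3 hP4 htX'
    exact ⟨pa P t, ⟨(mem_Xf_iff_Xset n).2 hmem, by omega⟩, hinv⟩

include hP1 hP2 hP3 hP4 hP5 in
lemma symm_SP : ∀ a : ℤ, a ∈ SP n P ↔ -a ∈ TP n P := by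
  intro a
  constructor
  · intro h
    rw [mem_SP] at h
    obtain ⟨haX, hap⟩ := h
    have haX' := (mem_Xf_iff_Xset n).1 haX
    rw [TP, Finset.mem_sdiff, mem_SP]
    refine ⟨(mem_Xf_iff_Xset n).2 (by
      rw [Xset, Set.mem_setOf_eq] at haX' ⊢
      rw [abs_neg]; exact ⟨by omega, haX'.2⟩), ?_⟩
    rintro ⟨-, hcon⟩
    rw [pa_neg n hP1 hP2 hP3 hP4 hP5 haX'] at hcon
    omega
  · intro h
    rw [TP, Finset.mem_sdiff, mem_SP] at h
    obtain ⟨hnaX, hnap⟩ := h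
    have haX : a ∈ Xf n := by
      have := neg_mem_Xf n hnaX; rwa [neg_neg] at this
    have haX' := (mem_Xf_iff_Xset n).1 haX
    obtain ⟨h1, _⟩ := pa_spec n hP2 hP4 haX'
    have hle : ¬(-a < pa P (-a)) := fun hc => hnap ⟨hnaX, hc⟩
    rw [pa_neg n hP1 hP2 hP3 hP4 hP5 haX'] at hle
    rw [mem_SP]
    exact ⟨haX, by omega⟩

include hP1 hP2 hP3 hP4 in
lemma ballot_SP : ∀ x : ℤ, ((TP n P).filter (· ≤ x)).card ≤ ((SP n P).filter (· ≤ x)).card := by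
  intro x
  apply Finset.card_le_card_of_injOn (pa P)
  · intro t ht
    obtain ⟨htT, htx⟩ := Finset.mem_filter.1 ht
    rw [TP, Finset.mem_sdiff, mem_SP] at htT
    obtain ⟨htX, htS⟩ := htT
    have htX' := (mem_Xf_iff_Xset n).1 htX
    obtain ⟨ht1, _⟩ := pa_spec n hP2 hP4 htX'
    have hplt : pa P t < t := by
      rcases lt_trichotomy t (pa P t) with h | h | h
      · exact absurd ⟨htX, h⟩ htS
      · exact absurd h.symm ht1
      · exact h
    have hmem := pa_mem n hP1 hP2 hP4 htX'
    have hinv := pa_invol n hP1 hP2 hP3 hP4 htX'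
    refine Finset.mem_filter.2 ⟨?_, by omega⟩
    rw [mem_SP]
    exact ⟨(mem_Xf_iff_Xset n).2 hmem, by omega⟩
  · intro t ht t' ht' heq
    simp only [Finset.coe_filter, Set.mem_setOf_eq] at ht ht'
    have h1 : t ∈ Xf n := (Finset.mem_sdiff.1 (by exact ht.1 : t ∈ TP n P)).1
    have h1' : t' ∈ Xf n := (Finset.mem_sdiff.1 (by exact ht'.1 : t' ∈ TP n P)).1
    have hi1 := pa_invol n hP1 hP2 hP3 hP4 ((mem_Xf_iff_Xset n).1 h1)
    have hi2 := pa_invol n hP1 hP2 hP3 hP4 ((mem_Xf_iff_Xset n).1 h1')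
    rw [heq] at hi1
    omega

variable (P) in
noncomputable def FP : Finset (Fin (2*n)) :=
  Finset.univ.filter (fun i => enc n i ∈ SP n P)

include hP1 hP2 hP3 hP4 in
lemma okF_FP : okF (FP n P) := by
  intro k
  have hx := enc_lt_zero n k
  have cc1 : ((FP n P) ∩ Finset.Iic k).card = ((SP n P).filter (· ≤ enc n k)).card := by
    apply Finset.card_nbij (i := enc n)
    · intro i hi
      obtain ⟨hiF, hik⟩ := Finset.mem_inter.1 hi
      rw [FP, Finset.mem_filter] at hiF
      exact Finset.mem_filter.2 ⟨hiF.2, (enc_le_enc n).2 (Finset.mem_Iic.1 hik)⟩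
    · exact (enc_inj n).injOn
    · intro a ha
      simp only [Finset.coe_filter, Set.mem_setOf_eq] at ha
      obtain ⟨haS, hax⟩ := ha
      have haX : a ∈ Xf n := (Finset.mem_filter.1 haS).1
      rw [mem_Xf] at haX
      obtain ⟨i, rfl⟩ := exists_enc n (a := a)
        (by have := abs_le.1 haX.2; omega) (by omega)
      refine ⟨i, ?_, rfl⟩
      simp only [Finset.coe_inter, Set.mem_inter_iff, Finset.mem_coe, Finset.mem_Iic]
      refine ⟨?_, (enc_le_enc n).1 hax⟩
      rw [FP, Finset.mem_filter]
      exact ⟨Finset.mem_univ _, haS⟩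
  have cc2 : ((Finset.univ \ FP n P) ∩ Finset.Iic k).card
      = ((TP n P).filter (· ≤ enc n k)).card := by
    apply Finset.card_nbij (i := enc n)
    · intro i hi
      obtain ⟨hiF, hik⟩ := Finset.mem_inter.1 hi
      have hiF' : i ∉ FP n P := (Finset.mem_sdiff.1 hiF).2
      rw [FP, Finset.mem_filter] at hiF'
      push_neg at hiF'
      refine Finset.mem_filter.2 ⟨?_, (enc_le_enc n).2 (Finset.mem_Iic.1 hik)⟩
      rw [TP, Finset.mem_sdiff]
      exact ⟨enc_mem_Xf n i, hiF' (Finset.mem_univ _)⟩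
    · exact (enc_inj n).injOn
    · intro a ha
      simp only [Finset.coe_filter, Set.mem_setOf_eq] at ha
      obtain ⟨haT, hax⟩ := ha
      obtain ⟨haX, hnS⟩ := Finset.mem_sdiff.1 haT
      rw [mem_Xf] at haX
      obtain ⟨i, rfl⟩ := exists_enc n (a := a)
        (by have := abs_le.1 haX.2; omega) (by omega)
      refine ⟨i, ?_, rfl⟩
      simp only [Finset.coe_inter, Set.mem_inter_iff, Finset.mem_coe, Finset.mem_Iic,
        Finset.mem_sdiff, Finset.mem_univ, true_and]
      refine ⟨?_, (enc_le_enc n).1 hax⟩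
      rw [FP, Finset.mem_filter]
      push_neg
      intro _
      exact hnS
  have cc3 : ((FP n P) ∩ Finset.Iic k).card + ((Finset.univ \ FP n P) ∩ Finset.Iic k).card
      = k.val + 1 := by
    rw [← Fin.card_Iic k, ← Finset.card_union_of_disjoint]
    · congr 1
      rw [← Finset.union_inter_distrib_right,
        Finset.union_sdiff_of_subset (Finset.subset_univ _), Finset.univ_inter]
    · exact Finset.disjoint_left.2 fun i hi hj =>
        (Finset.mem_sdiff.1 (Finset.mem_inter.1 hj).1).2 (Finset.mem_inter.1 hi).1
  have hb := ballot_SP n hP1 hP2 hP3 hP4 (enc n k)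
  omega

include hP1 hP2 hP3 hP4 hP5 in
lemma SF_FP_eq : SF n (FP n P) = SP n P := by
  ext a
  rcases lt_trichotomy a 0 with ha | rfl | ha
  · rw [mem_SF_neg n _ ha]
    constructor
    · rintro ⟨i, hi, rfl⟩
      rw [FP, Finset.mem_filter] at hi
      exact hi.2
    · intro h
      have haX : a ∈ Xf n := (Finset.mem_filter.1 h).1
      rw [mem_Xf] at haX
      obtain ⟨i, rfl⟩ := exists_enc n (a := a) (by have := abs_le.1 haX.2; omega) (by omega)
      exact ⟨i, by rw [FP, Finset.mem_filter]; exact ⟨Finset.mem_univ _, h⟩, rfl⟩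
  · constructor
    · intro h
      have := (mem_Xf n).1 (SF_subset n _ h)
      simp at this
    · intro h
      have := (mem_Xf n).1 ((Finset.filter_subset _ _) h)
      simp at this
  · rw [mem_SF_pos n _ ha]
    constructor
    · rintro ⟨i, hiF, hi⟩
      have h1 : enc n i ∉ SP n P := by
        intro hc
        exact hiF (by rw [FP, Finset.mem_filter]; exact ⟨Finset.mem_univ _, hc⟩)
      have h2 : (-a) ∈ TP n P := by
        rw [TP, Finset.mem_sdiff]
        have henc : enc n i = -a := by omega
        exact ⟨henc ▸ enc_mem_Xf n i, henc ▸ h1⟩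
      exact (symm_SP n hP1 hP2 hP3 hP4 hP5 a).2 h2
    · intro h
      have h2 := (symm_SP n hP1 hP2 hP3 hP4 hP5 a).1 h
      rw [TP, Finset.mem_sdiff] at h2
      obtain ⟨hX, hnS⟩ := h2
      rw [mem_Xf] at hX
      obtain ⟨i, hi⟩ := exists_enc n (a := -a) (by have := abs_le.1 hX.2; omega) (by omega)
      refine ⟨i, ?_, by omega⟩
      intro hc
      rw [FP, Finset.mem_filter] at hc
      exact hnS (hi ▸ hc.2)

include hP1 hP2 hP3 hP4 hP5 hP6 in
lemma PF_FP_eq : PF n (FP n P) = P := by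
  have hSF := SF_FP_eq n hP1 hP2 hP3 hP4 hP5
  have hTF : TF n (FP n P) = TP n P := by rw [TF, hSF]; rfl
  have hiota : ∀ a ∈ SP n P, iotaF n (FP n P) a = pa P a := by
    apply strictMonoOn_unique (SP n P) (TP n P)
    · have := iotaF_stm n (FP n P)
      rwa [hSF] at this
    · exact pa_stm n hP1 hP2 hP3 hP4 hP6
    · have := iotaF_img n (FP n P)
      rwa [hSF, hTF] at this
    · exact pa_img n hP1 hP2 hP3 hP4
  ext B
  constructor
  · rintro ⟨s, hs, rfl⟩
    rw [hSF] at hs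
    rw [hiota s hs]
    have hsX := (mem_Xf_iff_Xset n).1 ((Finset.filter_subset _ _) hs)
    exact (pa_spec n hP2 hP4 hsX).2
  · intro hB
    obtain ⟨x, y, hxy, rfl⟩ := Set.ncard_eq_two.1 (hP4 B hB)
    have hxX : x ∈ Xset n := hP1 _ hB (by simp)
    have hyX : y ∈ Xset n := hP1 _ hB (by simp)
    have hpax : pa P x = y := pa_eq n hP2 hP3 hP4 hB (fun h => hxy h.symm) hxX
    rcases lt_or_gt_of_ne hxy with hlt | hlt
    · have hxS : x ∈ SP n P := by
        rw [mem_SP]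
        exact ⟨(mem_Xf_iff_Xset n).2 hxX, by omega⟩
      refine ⟨x, by rwa [hSF], ?_⟩
      rw [hiota x hxS, hpax]
    · have hpay : pa P y = x := by
        have := pa_invol n hP1 hP2 hP3 hP4 hxX
        rw [hpax] at this
        exact this
      have hyS : y ∈ SP n P := by
        rw [mem_SP]
        exact ⟨(mem_Xf_iff_Xset n).2 hyX, by omega⟩
      refine ⟨y, by rwa [hSF], ?_⟩
      rw [hiota y hyS, hpay, Set.pair_comm]

end Extract

lemma FP_PF_eq (F : Finset (Fin (2*n))) (hok : okF F) : FP n (PF n F) = F := by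
  have g2 := PF_cover n F
  have g3 := PF_disj n F
  have g4 := PF_card n F
  have hSP : SP n (PF n F) = SF n F := by
    ext a
    rw [mem_SP]
    constructor
    · rintro ⟨haX, hap⟩
      by_cases hS : a ∈ SF n F
      · exact hS
      · exfalso
        have haT : a ∈ TF n F := Finset.mem_sdiff.2 ⟨haX, hS⟩
        rw [← iotaF_img n F] at haT
        obtain ⟨s, hs, rfl⟩ := Finset.mem_image.1 haT
        have hblock : ({iotaF n F s, s} : Set ℤ) ∈ PF n F := by
          rw [Set.pair_comm]
          exact ⟨s, hs, rfl⟩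
        have hlt := lt_iotaF n F hok s hs
        have hmem : iotaF n F s ∈ Xset n :=
          (mem_Xf_iff_Xset n).1 ((Finset.sdiff_subset) (iotaF_mem n F hs))
        have hpa : pa (PF n F) (iotaF n F s) = s :=
          pa_eq n g2 g3 g4 hblock (by omega) hmem
        omega
    · intro hS
      have hblock : ({a, iotaF n F a} : Set ℤ) ∈ PF n F := ⟨a, hS, rfl⟩
      have hlt := lt_iotaF n F hok a hS
      have haX := SF_subset n F hS
      have hpa : pa (PF n F) a = iotaF n F a :=
        pa_eq n g2 g3 g4 hblock (by omega) ((mem_Xf_iff_Xset n).1 haX)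
      exact ⟨haX, by omega⟩
  rw [FP, hSP]
  ext i
  rw [Finset.mem_filter]
  constructor
  · rintro ⟨-, h⟩
    obtain ⟨j, hj, hje⟩ := (mem_SF_neg n F (enc_lt_zero n i)).1 h
    rwa [enc_inj n hje] at hj
  · intro h
    exact ⟨Finset.mem_univ _, (mem_SF_neg n F (enc_lt_zero n i)).2 ⟨i, h, rfl⟩⟩

end SNN4

theorem symmetric_nonnesting_partitions_count' (n : ℕ) :
    Nat.card {P : Set (Set ℤ) //
      (∀ B ∈ P, B ⊆ {a : ℤ | a ≠ 0 ∧ |a| ≤ 2 * n}) ∧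
      (⋃ B ∈ P, B) = {a : ℤ | a ≠ 0 ∧ |a| ≤ 2 * n} ∧
      P.PairwiseDisjoint id ∧
      (∀ B ∈ P, Set.ncard B = 2) ∧
      (∀ B ∈ P, (fun a : ℤ => -a) '' B ∈ P) ∧
      (∀ a b c d : ℤ, ({a, b} : Set ℤ) ∈ P → ({c, d} : Set ℤ) ∈ P →
        a < c → c < d → d < b → False)} =
    Nat.choose (2 * n) n := by
  classical
  have e : {P : Set (Set ℤ) //
      (∀ B ∈ P, B ⊆ {a : ℤ | a ≠ 0 ∧ |a| ≤ 2 * n}) ∧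
      (⋃ B ∈ P, B) = {a : ℤ | a ≠ 0 ∧ |a| ≤ 2 * n} ∧
      P.PairwiseDisjoint id ∧
      (∀ B ∈ P, Set.ncard B = 2) ∧
      (∀ B ∈ P, (fun a : ℤ => -a) '' B ∈ P) ∧
      (∀ a b c d : ℤ, ({a, b} : Set ℤ) ∈ P → ({c, d} : Set ℤ) ∈ P →
        a < c → c < d → d < b → False)}
      ≃ {F : Finset (Fin (2*n)) // SNN.okF F} := by
    refine ⟨fun P => ⟨SNN4.FP n P.1,
        SNN4.okF_FP n P.2.1 P.2.2.1 P.2.2.2.1 P.2.2.2.2.1⟩,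
      fun F => ⟨SNN4.PF n F.1, SNN4.PF_sub n F.1, SNN4.PF_cover n F.1, SNN4.PF_disj n F.1,
        SNN4.PF_card n F.1, SNN4.PF_symm n F.1, SNN4.PF_nonnest n F.1 F.2⟩, ?_, ?_⟩
    · rintro ⟨P, h1, h2, h3, h4, h5, h6⟩
      exact Subtype.ext (SNN4.PF_FP_eq n h1 h2 h3 h4 h5 h6)
    · rintro ⟨F, hF⟩
      exact Subtype.ext (SNN4.FP_PF_eq n F hF)
  rw [Nat.card_congr e, Nat.card_eq_fintype_card, Fintype.card_subtype]
  exact SNN.total_count n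


/-- The number of symmetric non-nesting partitions of `[-2n, 2n] \ {0}`
(all blocks of size 2, closed under negation of blocks, no two nested blocks)
is `C(2n, n)`. -/
theorem symmetric_nonnesting_partitions_count (n : ℕ) :
    Nat.card {P : Set (Set ℤ) //
      (∀ B ∈ P, B ⊆ {a : ℤ | a ≠ 0 ∧ |a| ≤ 2 * n}) ∧
      (⋃ B ∈ P, B) = {a : ℤ | a ≠ 0 ∧ |a| ≤ 2 * n} ∧
      P.PairwiseDisjoint id ∧
      (∀ B ∈ P, Set.ncard B = 2) ∧
      (∀ B ∈ P, (fun a : ℤ => -a) '' B ∈ P) ∧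
      (∀ a b c d : ℤ, ({a, b} : Set ℤ) ∈ P → ({c, d} : Set ℤ) ∈ P →
        a < c → c < d → d < b → False)} =
    Nat.choose (2 * n) n :=
  symmetric_nonnesting_partitions_count' n
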